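/- Let g be a unitary automorphism of a hermitian space (V, h) over (E, σ) with characteristic polynomial Π_{i=1}^ℓ P_i^{a_i}, the P_i distinct monic irreducible, V_i = ker P_i^{a_i}(g), and let τ be the involution of indices with P_{τ(i)} = P_i*. Then: (i) if τ(i) = i, the restriction of h to V_i is nondegenerate and V_i is orthogonal to ⊕_{j ≠ i} V_j; (ii) if τ(i) = j ≠ i, then V_i and V_j are totally isotropic (h vanishes identically on each), V_i ⊕ V_j is orthogonal to V_k for every k ∉ {i, j}, and the restriction of h to V_i ⊕ V_j is nondegenerate. -/

import Mathlib

open Polynomial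

section Stmt10Aux
variable {E : Type*} [Field E] {V : Type*} [AddCommGroup V] [Module E V]

lemma commute_aeval' {H G : Module.End E V} (hc : Commute H G) (q : E[X]) :
    Commute H (aeval G q) := by
  induction q using Polynomial.induction_on' with
  | add p q hp hq => rw [map_add]; exact hp.add_right hq
  | monomial n c =>
      rw [aeval_monomial]
      exact (Algebra.commute_algebraMap_right c H).mul_right (hc.pow_right n)

lemma reverse_pow' {R : Type*} [CommRing R] [NoZeroDivisors R] (p : R[X]) (n : ℕ) :
    (p ^ n).reverse = p.reverse ^ n := by
  induction n with
  | zero => simpa using Polynomial.reverse_C (1 : R)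
  | succ n ih => rw [pow_succ, pow_succ, Polynomial.reverse_mul_of_domain, ih]

lemma reflect_sum' {R : Type*} [CommSemiring R] (d : ℕ) {ι : Type*} (s : Finset ι)
    (f : ι → R[X]) : reflect d (∑ i ∈ s, f i) = ∑ i ∈ s, reflect d (f i) := by
  classical
  induction s using Finset.induction_on with
  | empty => simp
  | insert hns ih => simp [Finset.sum_insert, *, Polynomial.reflect_add]

end Stmt10Aux

/-- `P*`: for monic `P` with nonzero constant term `b_d`, `P*(T) = σ(b_d)⁻¹ T^d P^σ(T⁻¹)`. -/
noncomputable def pstar {k : Type*} [Field k] (σ : k →+* k) (P : Polynomial k) : Polynomial k :=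
  Polynomial.C (σ (P.coeff 0))⁻¹ * (P.map σ).reverse

theorem stmt10 {E : Type*} [Field E] (σ : E →+* E) (hσ : ∀ x, σ (σ x) = x)
    {V : Type*} [AddCommGroup V] [Module E V] [FiniteDimensional E V]
    (h : V →ₗ[E] V →ₛₗ[σ] E)
    (h_herm : ∀ x y : V, h y x = σ (h x y))
    (h_nondeg : ∀ x : V, (∀ y : V, h x y = 0) → x = 0)
    (g : V ≃ₗ[E] V) (hg : ∀ x y : V, h (g x) (g y) = h x y)
    (ℓ : ℕ) (P : Fin ℓ → Polynomial E) (a : Fin ℓ → ℕ)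
    (hPmonic : ∀ i, (P i).Monic) (hPirr : ∀ i, Irreducible (P i))
    (hPinj : Function.Injective P) (hapos : ∀ i, 0 < a i)
    (hfac : LinearMap.charpoly g.toLinearMap = ∏ i, P i ^ a i)
    (t : Fin ℓ → Fin ℓ) (ht : ∀ i, t (t i) = i)
    (htP : ∀ i, P (t i) = pstar σ (P i)) (hta : ∀ i, a (t i) = a i) :
    (∀ i : Fin ℓ, t i = i →
      ((∀ x ∈ LinearMap.ker (Polynomial.aeval g.toLinearMap (P i ^ a i)),
          (∀ y ∈ LinearMap.ker (Polynomial.aeval g.toLinearMap (P i ^ a i)), h x y = 0) →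
          x = 0) ∧
       (∀ j : Fin ℓ, j ≠ i →
          ∀ x ∈ LinearMap.ker (Polynomial.aeval g.toLinearMap (P i ^ a i)),
            ∀ y ∈ LinearMap.ker (Polynomial.aeval g.toLinearMap (P j ^ a j)), h x y = 0))) ∧
    (∀ i j : Fin ℓ, t i = j → j ≠ i →
      ((∀ x ∈ LinearMap.ker (Polynomial.aeval g.toLinearMap (P i ^ a i)),
          ∀ y ∈ LinearMap.ker (Polynomial.aeval g.toLinearMap (P i ^ a i)), h x y = 0) ∧
       (∀ x ∈ LinearMap.ker (Polynomial.aeval g.toLinearMap (P j ^ a j)),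
          ∀ y ∈ LinearMap.ker (Polynomial.aeval g.toLinearMap (P j ^ a j)), h x y = 0) ∧
       (∀ k : Fin ℓ, k ≠ i → k ≠ j →
          ∀ x ∈ (LinearMap.ker (Polynomial.aeval g.toLinearMap (P i ^ a i)) ⊔
                 LinearMap.ker (Polynomial.aeval g.toLinearMap (P j ^ a j))),
            ∀ y ∈ LinearMap.ker (Polynomial.aeval g.toLinearMap (P k ^ a k)), h x y = 0) ∧
       (∀ x ∈ (LinearMap.ker (Polynomial.aeval g.toLinearMap (P i ^ a i)) ⊔
               LinearMap.ker (Polynomial.aeval g.toLinearMap (P j ^ a j))),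
          (∀ y ∈ (LinearMap.ker (Polynomial.aeval g.toLinearMap (P i ^ a i)) ⊔
                  LinearMap.ker (Polynomial.aeval g.toLinearMap (P j ^ a j))), h x y = 0) →
          x = 0))) := by
  classical
  set G := g.toLinearMap with hGdef
  set Gi := g.symm.toLinearMap with hGidef
  have hGGi : G * Gi = 1 := by
    ext x; simp [hGdef, hGidef, Module.End.mul_apply]
  have hGiG : Gi * G = 1 := by
    ext x; simp [hGdef, hGidef, Module.End.mul_apply]
  have hcomm : Commute G Gi := by unfold Commute SemiconjBy; rw [hGGi, hGiG]
  have hpowone : ∀ n : ℕ, G ^ n * Gi ^ n = 1 := fun n => by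
    rw [← hcomm.mul_pow, hGGi, one_pow]
  have hpowone' : ∀ n : ℕ, Gi ^ n * G ^ n = 1 := fun n => by
    rw [← hcomm.symm.mul_pow, hGiG, one_pow]
  -- adjoint identities
  have hadj0 : ∀ x y : V, h (G x) y = h x (Gi y) := by
    intro x y
    have := hg x (g.symm y)
    rw [LinearEquiv.apply_symm_apply] at this
    simpa [hGdef, hGidef] using this
  have hadjn : ∀ (n : ℕ) (x y : V), h ((G ^ n) x) y = h x ((Gi ^ n) y) := by
    intro n
    induction n with
    | zero => intro x y; simp
    | succ n ih =>
        intro x y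
        have h1 : (G ^ (n + 1)) x = (G ^ n) (G x) := by rw [pow_succ, Module.End.mul_apply]
        rw [h1, ih, hadj0, ← Module.End.mul_apply, ← pow_succ']
  have hadjP : ∀ (q : E[X]) (x y : V), h ((aeval G q) x) y = h x ((aeval Gi (q.map σ)) y) := by
    intro q
    induction q using Polynomial.induction_on' with
    | add p q hp hq =>
        intro x y
        simp only [Polynomial.map_add, map_add, LinearMap.add_apply, hp, hq]
    | monomial n c =>
        intro x y
        rw [Polynomial.map_monomial, aeval_monomial, aeval_monomial]
        simp only [Module.End.mul_apply, Module.algebraMap_end_apply, map_smul,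
          LinearMap.smul_apply, LinearMap.map_smulₛₗ, hσ, smul_eq_mul, hadjn n x y]
  -- reflect formula
  have hrefl : ∀ (p : E[X]) (d : ℕ), p.natDegree < d + 1 →
      aeval G (reflect d p) = G ^ d * aeval Gi p := by
    intro p d hd
    conv_lhs => rw [p.as_sum_range' (d + 1) hd]
    conv_rhs => rw [p.as_sum_range' (d + 1) hd]
    rw [reflect_sum']
    simp only [← Polynomial.C_mul_X_pow_eq_monomial, Polynomial.reflect_C_mul_X_pow]
    rw [map_sum, map_sum, Finset.mul_sum]
    refine Finset.sum_congr rfl fun i hi => ?_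
    have hid : i ≤ d := Nat.lt_succ_iff.mp (Finset.mem_range.mp hi)
    rw [Polynomial.revAt_le hid]
    simp only [map_mul, aeval_C, map_pow, aeval_X]
    have hpow : G ^ d * Gi ^ i = G ^ (d - i) := by
      have hsplit : G ^ d = G ^ (d - i) * G ^ i := by
        rw [← pow_add, Nat.sub_add_cancel hid]
      rw [hsplit, mul_assoc, hpowone i, mul_one]
    rw [← mul_assoc, (Algebra.commute_algebraMap_right _ _).eq, mul_assoc, hpow]
  -- constant coefficients nonzero
  have hc0 : ∀ i, σ ((P i).coeff 0) ≠ 0 := by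
    intro i hzero
    have hti := htP i
    rw [pstar, hzero, inv_zero, map_zero, zero_mul] at hti
    exact (hPmonic (t i)).ne_zero hti
  have hrev : ∀ i, ((P i).map σ).reverse = C (σ ((P i).coeff 0)) * P (t i) := by
    intro i
    rw [htP i, pstar, ← mul_assoc, ← C_mul, mul_inv_cancel₀ (hc0 i), C_1, one_mul]
  have hrevpow : ∀ i, ((P i ^ a i).map σ).reverse
      = C ((σ ((P i).coeff 0)) ^ a i) * P (t i) ^ a i := by
    intro i
    rw [Polynomial.map_pow, reverse_pow', hrev i, mul_pow, ← C_pow]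
  -- coprimality
  have coppow : ∀ i j : Fin ℓ, i ≠ j → IsCoprime (P i ^ a i) (P j ^ a j) := by
    intro i j hij
    refine IsCoprime.pow ?_
    rcases dvd_or_isCoprime (P i) (P j) (hPirr i) with hdvd | hcop
    · exact absurd (Polynomial.eq_of_monic_of_associated (hPmonic i) (hPmonic j)
        ((hPirr i).associated_of_dvd (hPirr j) hdvd)) (fun e => hij (hPinj e))
    · exact hcop
  -- two-term kernel lemma
  have htwo : ∀ p q : E[X], IsCoprime p q →
      LinearMap.ker (aeval G (p * q)) ≤
        LinearMap.ker (aeval G p) ⊔ LinearMap.ker (aeval G q) := by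
    intro p q hpq x hx
    have hx' : aeval G (p * q) x = 0 := LinearMap.mem_ker.mp hx
    obtain ⟨u, v, huv⟩ := hpq
    have h1 : (aeval G (v * q)) x + (aeval G (u * p)) x = x := by
      have e : (aeval G (v * q) + aeval G (u * p)) x = (1 : Module.End E V) x := by
        rw [← map_add, show v * q + u * p = 1 by linear_combination huv, map_one]
      simpa using e
    have m1 : (aeval G (v * q)) x ∈ LinearMap.ker (aeval G p) := by
      rw [LinearMap.mem_ker, ← Module.End.mul_apply, ← map_mul,
        show p * (v * q) = v * (p * q) by ring, map_mul, Module.End.mul_apply, hx', map_zero]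
    have m2 : (aeval G (u * p)) x ∈ LinearMap.ker (aeval G q) := by
      rw [LinearMap.mem_ker, ← Module.End.mul_apply, ← map_mul,
        show q * (u * p) = u * (p * q) by ring, map_mul, Module.End.mul_apply, hx', map_zero]
    rw [← h1]
    exact Submodule.add_mem_sup m1 m2
  -- span
  have hprodker : ∀ s : Finset (Fin ℓ),
      LinearMap.ker (aeval G (∏ k ∈ s, P k ^ a k)) ≤
        ⨆ k ∈ s, LinearMap.ker (aeval G (P k ^ a k)) := by
    intro s
    induction s using Finset.induction_on with
    | empty => simp [Module.End.one_eq_id]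
    | @insert b s hns ih =>
        rw [Finset.prod_insert hns]
        refine le_trans (htwo _ _ (IsCoprime.prod_right fun j hj =>
          coppow b j (fun e => hns (e ▸ hj)))) ?_
        rw [Finset.iSup_insert]
        exact sup_le_sup le_rfl ih
  have hspan : ∀ y : V, y ∈ ⨆ k : Fin ℓ, LinearMap.ker (aeval G (P k ^ a k)) := by
    intro y
    have h0 : aeval G (∏ k : Fin ℓ, P k ^ a k) = 0 := by
      rw [← hfac]; exact LinearMap.aeval_self_charpoly _
    have hy : y ∈ LinearMap.ker (aeval G (∏ k ∈ Finset.univ, P k ^ a k)) := by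
      rw [LinearMap.mem_ker, h0, LinearMap.zero_apply]
    simpa using hprodker Finset.univ hy
  -- key orthogonality
  have ortho : ∀ i j : Fin ℓ, t i ≠ j →
      ∀ x ∈ LinearMap.ker (aeval G (P i ^ a i)),
      ∀ y ∈ LinearMap.ker (aeval G (P j ^ a j)), h x y = 0 := by
    intro i j hij x hx y hy
    set s : E := (σ ((P i).coeff 0)) ^ a i with hs
    have hs0 : s ≠ 0 := pow_ne_zero _ (hc0 i)
    set Q : E[X] := (P i ^ a i).map σ with hQ
    set d : ℕ := Q.natDegree with hd
    obtain ⟨u, v, huv⟩ := coppow (t i) j hij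
    rw [hta i] at huv
    set y1 : V := s⁻¹ • ((G ^ d) y) with hy1
    have hy1mem : aeval G (P j ^ a j) y1 = 0 := by
      have c1 : Commute ((G : Module.End E V) ^ d) (aeval G (P j ^ a j)) :=
        commute_aeval' ((Commute.refl G).pow_left d) _
      rw [hy1, map_smul, ← Module.End.mul_apply, ← c1.eq, Module.End.mul_apply,
        LinearMap.mem_ker.mp hy, map_zero, smul_zero]
    set z : V := (aeval G u) y1 with hz
    have hz1 : (aeval G (P (t i) ^ a i)) z = y1 := by
      rw [hz, ← Module.End.mul_apply, ← map_mul,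
        show P (t i) ^ a i * u = 1 - v * P j ^ a j by linear_combination huv,
        map_sub, map_one, LinearMap.sub_apply, Module.End.one_apply, map_mul,
        Module.End.mul_apply, hy1mem, map_zero, sub_zero]
    have hqrev : reflect d Q = C s * P (t i) ^ a i := by
      rw [hd]; exact hrevpow i
    have hdeg : Q.natDegree < d + 1 := by rw [hd]; exact Nat.lt_succ_self _
    have e1 : (G ^ d * aeval Gi Q) z = s • y1 := by
      rw [← hrefl Q d hdeg, hqrev, map_mul, Module.End.mul_apply, aeval_C,
        Module.algebraMap_end_apply, hz1]
    have hy2 : (aeval Gi Q) z = y := by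
      have e2 : (aeval Gi Q) z = (Gi ^ d) (s • y1) := by
        calc (aeval Gi Q) z = ((Gi ^ d * G ^ d) * aeval Gi Q) z := by
              rw [hpowone' d, one_mul]
          _ = (Gi ^ d) ((G ^ d * aeval Gi Q) z) := by
              rw [mul_assoc, Module.End.mul_apply]
          _ = (Gi ^ d) (s • y1) := by rw [e1]
      rw [e2, hy1, map_smul, map_smul, smul_smul, mul_inv_cancel₀ hs0, one_smul,
        ← Module.End.mul_apply, hpowone' d, Module.End.one_apply]
    calc h x y = h x ((aeval Gi ((P i ^ a i).map σ)) z) := by rw [← hQ, hy2]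
      _ = h ((aeval G (P i ^ a i)) x) z := (hadjP _ x z).symm
      _ = 0 := by rw [LinearMap.mem_ker.mp hx, map_zero, LinearMap.zero_apply]
  -- global nondegeneracy via span
  have hfull : ∀ x : V,
      (∀ k : Fin ℓ, ∀ y ∈ LinearMap.ker (aeval G (P k ^ a k)), h x y = 0) → x = 0 := by
    intro x hx
    refine h_nondeg x fun y => ?_
    refine Submodule.iSup_induction (motive := fun w => h x w = 0) _ (hspan y) (fun k z hz => hx k z hz) ?_ ?_
    · show h x (0 : V) = 0; rw [map_zero]
    · intro w1 w2 hw1 hw2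
      show h x (w1 + w2) = 0
      rw [map_add, hw1, hw2, add_zero]
  constructor
  · -- case (i)
    intro i hi
    constructor
    · intro x hx hxy
      refine hfull x fun k y hy => ?_
      by_cases hk : k = i
      · exact hxy y (hk ▸ hy)
      · exact ortho i k (by rw [hi]; exact fun e => hk e.symm) x hx y hy
    · intro j hj x hx y hy
      exact ortho i j (by rw [hi]; exact fun e => hj e.symm) x hx y hy
  · -- case (ii)
    intro i j hij hji
    have htj : t j = i := by rw [← hij, ht]
    have horthik : ∀ k : Fin ℓ, k ≠ j →
        ∀ x ∈ LinearMap.ker (aeval G (P i ^ a i)),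
        ∀ y ∈ LinearMap.ker (aeval G (P k ^ a k)), h x y = 0 := by
      intro k hk
      exact ortho i k (by rw [hij]; exact fun e => hk e.symm)
    have horthjk : ∀ k : Fin ℓ, k ≠ i →
        ∀ x ∈ LinearMap.ker (aeval G (P j ^ a j)),
        ∀ y ∈ LinearMap.ker (aeval G (P k ^ a k)), h x y = 0 := by
      intro k hk
      exact ortho j k (by rw [htj]; exact fun e => hk e.symm)
    refine ⟨?_, ?_, ?_, ?_⟩
    · exact horthik i (fun e => hji e.symm)
    · exact horthjk j hji
    · intro k hki hkj x hxmem y hy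
      obtain ⟨x1, hx1, x2, hx2, rfl⟩ := Submodule.mem_sup.mp hxmem
      rw [map_add, LinearMap.add_apply, horthik k hkj x1 hx1 y hy,
        horthjk k hki x2 hx2 y hy, add_zero]
    · intro x hxmem hxperp
      obtain ⟨x1, hx1, x2, hx2, hxeq⟩ := Submodule.mem_sup.mp hxmem
      refine hfull x fun k y hy => ?_
      by_cases hk1 : k = i
      · exact hxperp y (Submodule.mem_sup_left (hk1 ▸ hy))
      by_cases hk2 : k = j
      · exact hxperp y (Submodule.mem_sup_right (hk2 ▸ hy))
      · rw [← hxeq, map_add, LinearMap.add_apply,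
          horthik k hk2 x1 hx1 y hy, horthjk k hk1 x2 hx2 y hy, add_zero]
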